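/- Chernoff variant: under the same assumptions as the pointwise Lipschitzness of conditional accuracy, |P(H(X)=Y | E) − P(H'(X)=Y | E)| ≤ inf over t ≥ 0 of exp(t‖h−h'‖) · E[exp(−t·|ρ(h,X,Y)|/L(X,Y)) | E]. -/

import Mathlib

open MeasureTheory ProbabilityTheory Finset

/-- Chernoff variant of the pointwise Lipschitzness of conditional accuracy:
`|P(H(X)=Y | E) − P(H'(X)=Y | E)| ≤
  inf_{t ≥ 0} exp(t·dist h h') · E[exp(−t·|ρ(h,X,Y)|/L(X,Y)) | E]`. -/
theorem stmt5 {Ω 𝓗 𝓧 𝓨 : Type*} [MeasurableSpace Ω] [PseudoMetricSpace 𝓗]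
    [Fintype 𝓨] [DecidableEq 𝓨] (hcard : 2 ≤ Fintype.card 𝓨)
    (score : 𝓗 → 𝓧 → 𝓨 → ℝ)
    (hne : ∀ y : 𝓨, (Finset.univ.erase y).Nonempty)
    (ρ : 𝓗 → 𝓧 → 𝓨 → ℝ)
    (hρ : ∀ h x y, ρ h x y =
      score h x y - (Finset.univ.erase y).sup' (hne y) (fun y' => score h x y'))
    (L : 𝓧 → 𝓨 → ℝ) (hL : ∀ x y, 0 < L x y)
    (hLip : ∀ h h' : 𝓗, ∀ x y, |ρ h x y - ρ h' x y| ≤ L x y * dist h h')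
    (μ : Measure Ω) [IsProbabilityMeasure μ]
    (Xv : Ω → 𝓧) (Yv : Ω → 𝓨)
    (h h' : 𝓗)
    (hmeas : Measurable fun ω => |ρ h (Xv ω) (Yv ω)| / L (Xv ω) (Yv ω))
    (E : Set Ω) (hE : MeasurableSet E) (hEpos : 0 < μ E) :
    |((μ[|E]) {ω | 0 ≤ ρ h (Xv ω) (Yv ω)}).toReal -
        ((μ[|E]) {ω | 0 < ρ h' (Xv ω) (Yv ω)}).toReal| ≤
      ⨅ t : Set.Ici (0 : ℝ),
        Real.exp ((t : ℝ) * dist h h') *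
          ∫ ω, Real.exp (-(t : ℝ) * |ρ h (Xv ω) (Yv ω)| / L (Xv ω) (Yv ω)) ∂(μ[|E]) := by
  set ν := μ[|E] with hν
  haveI : IsProbabilityMeasure ν := cond_isProbabilityMeasure hEpos.ne'
  set Z : Ω → ℝ := fun ω => |ρ h (Xv ω) (Yv ω)| / L (Xv ω) (Yv ω) with hZ
  set d : ℝ := dist h h' with hd
  set A : Set Ω := {ω | 0 ≤ ρ h (Xv ω) (Yv ω)} with hA
  set B : Set Ω := {ω | 0 < ρ h' (Xv ω) (Yv ω)} with hB
  set C : Set Ω := {ω | Z ω ≤ d} with hC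
  have hZnn : ∀ ω, 0 ≤ Z ω := fun ω => div_nonneg (abs_nonneg _) (hL _ _).le
  have hCmeas : MeasurableSet C := measurableSet_le hmeas measurable_const
  -- symmetric difference inclusion
  have hsub1 : A \ B ⊆ C := by
    rintro ω ⟨h1, h2⟩
    simp only [hA, hB, Set.mem_setOf_eq, not_lt] at h1 h2
    have hlip := hLip h h' (Xv ω) (Yv ω)
    have : |ρ h (Xv ω) (Yv ω)| ≤ L (Xv ω) (Yv ω) * d := by
      rw [abs_of_nonneg h1]
      calc ρ h (Xv ω) (Yv ω) ≤ ρ h (Xv ω) (Yv ω) - ρ h' (Xv ω) (Yv ω) := by linarith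
        _ ≤ |ρ h (Xv ω) (Yv ω) - ρ h' (Xv ω) (Yv ω)| := le_abs_self _
        _ ≤ L (Xv ω) (Yv ω) * d := hlip
    exact (div_le_iff₀ (hL _ _)).2 (by linarith [this])
  have hsub2 : B \ A ⊆ C := by
    rintro ω ⟨h1, h2⟩
    simp only [hA, hB, Set.mem_setOf_eq, not_le] at h1 h2
    have hlip := hLip h h' (Xv ω) (Yv ω)
    have : |ρ h (Xv ω) (Yv ω)| ≤ L (Xv ω) (Yv ω) * d := by
      rw [abs_of_neg h2]
      calc -ρ h (Xv ω) (Yv ω) ≤ ρ h' (Xv ω) (Yv ω) - ρ h (Xv ω) (Yv ω) := by linarith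
        _ ≤ |ρ h' (Xv ω) (Yv ω) - ρ h (Xv ω) (Yv ω)| := le_abs_self _
        _ = |ρ h (Xv ω) (Yv ω) - ρ h' (Xv ω) (Yv ω)| := abs_sub_comm _ _
        _ ≤ L (Xv ω) (Yv ω) * d := hlip
    exact (div_le_iff₀ (hL _ _)).2 (by linarith [this])
  have step1 : |(ν A).toReal - (ν B).toReal| ≤ (ν C).toReal := by
    have hAle : ν A ≤ ν B + ν C :=
      calc ν A ≤ ν (B ∪ (A \ B)) := measure_mono (by intro ω hω; by_cases hb : ω ∈ B
                                                     · exact Or.inl hb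
                                                     · exact Or.inr ⟨hω, hb⟩)
        _ ≤ ν B + ν (A \ B) := measure_union_le _ _
        _ ≤ ν B + ν C := add_le_add le_rfl (measure_mono hsub1)
    have hBle : ν B ≤ ν A + ν C :=
      calc ν B ≤ ν (A ∪ (B \ A)) := measure_mono (by intro ω hω; by_cases hb : ω ∈ A
                                                     · exact Or.inl hb
                                                     · exact Or.inr ⟨hω, hb⟩)
        _ ≤ ν A + ν (B \ A) := measure_union_le _ _
        _ ≤ ν A + ν C := add_le_add le_rfl (measure_mono hsub2)
    have fA := measure_ne_top ν A
    have fB := measure_ne_top ν B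
    have fC := measure_ne_top ν C
    rw [abs_sub_le_iff]
    constructor
    · have := ENNReal.toReal_mono (by finiteness) hAle
      rw [ENNReal.toReal_add fB fC] at this
      linarith
    · have := ENNReal.toReal_mono (by finiteness) hBle
      rw [ENNReal.toReal_add fA fC] at this
      linarith
  refine le_trans step1 (le_ciInf fun t => ?_)
  obtain ⟨t, ht⟩ := t
  simp only
  -- integrand rewrite
  have hint : ∀ ω, Real.exp (-t * |ρ h (Xv ω) (Yv ω)| / L (Xv ω) (Yv ω))
      = Real.exp (-(t * Z ω)) := by
    intro ω; rw [hZ]; ring_nf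
  have hfmeas : Measurable fun ω => Real.exp (-(t * Z ω)) :=
    (Real.measurable_exp.comp ((hmeas.const_mul t).neg))
  have hfle : ∀ ω, Real.exp (-(t * Z ω)) ≤ 1 := fun ω => by
    rw [Real.exp_le_one_iff]
    have := mul_nonneg ht (hZnn ω); linarith
  have hfint : Integrable (fun ω => Real.exp (-(t * Z ω))) ν := by
    refine (integrable_const (1 : ℝ)).mono' hfmeas.aestronglyMeasurable ?_
    filter_upwards with ω
    rw [Real.norm_eq_abs, abs_of_pos (Real.exp_pos _)]
    exact hfle ω
  have markov : Real.exp (-(t * d)) * (ν C).toReal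
      ≤ ∫ ω, Real.exp (-(t * Z ω)) ∂ν := by
    calc Real.exp (-(t * d)) * (ν C).toReal
        = ∫ _ω in C, Real.exp (-(t * d)) ∂ν := by
          rw [setIntegral_const, smul_eq_mul, mul_comm]; rfl
      _ ≤ ∫ ω in C, Real.exp (-(t * Z ω)) ∂ν := by
          refine setIntegral_mono_on (integrableOn_const (measure_ne_top _ _))
            hfint.integrableOn hCmeas fun ω hω => ?_
          have hZd : Z ω ≤ d := hω
          have ht' : (0:ℝ) ≤ t := ht
          exact Real.exp_le_exp.2 (by nlinarith)
      _ ≤ ∫ ω, Real.exp (-(t * Z ω)) ∂ν :=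
          setIntegral_le_integral hfint (by filter_upwards with ω; exact (Real.exp_pos _).le)
  have key : (ν C).toReal ≤ Real.exp (t * d) * ∫ ω, Real.exp (-(t * Z ω)) ∂ν := by
    have h1 : Real.exp (t * d) * (Real.exp (-(t * d)) * (ν C).toReal)
        ≤ Real.exp (t * d) * ∫ ω, Real.exp (-(t * Z ω)) ∂ν :=
      mul_le_mul_of_nonneg_left markov (Real.exp_pos _).le
    rwa [← mul_assoc, ← Real.exp_add, add_neg_cancel, Real.exp_zero, one_mul] at h1
  calc (ν C).toReal ≤ Real.exp (t * d) * ∫ ω, Real.exp (-(t * Z ω)) ∂ν := key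
    _ = Real.exp (t * d) *
        ∫ ω, Real.exp (-t * |ρ h (Xv ω) (Yv ω)| / L (Xv ω) (Yv ω)) ∂ν := by
          congr 1; exact integral_congr_ae (by filter_upwards with ω; rw [hint ω])
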